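/- Let r ≥ 3 and 1 ≤ s < r. Then the maps b₁, …, b_r are homeomorphisms of X = {0,1}^ℕ, the group H̃_r = ⟨b₁, …, b_r⟩ ≤ Homeo(X) contains a non-Hausdorff element, and the action of H̃_r on X is not locally quasi-analytic. -/

import Mathlib

/-- The group of self-homeomorphisms of a topological space, with composition
`(f * g) x = f (g x)`. -/
instance homeoGroup {X : Type*} [TopologicalSpace X] : Group (X ≃ₜ X) where
  mul f g := g.trans f
  one := Homeomorph.refl X
  inv := Homeomorph.symm
  mul_assoc _ _ _ := Homeomorph.ext fun _ => rfl
  one_mul _ := Homeomorph.ext fun _ => rfl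
  mul_one _ := Homeomorph.ext fun _ => rfl
  inv_mul_cancel f := Homeomorph.ext f.symm_apply_apply

/-- The standard metric on the Cantor set `{0,1}^ℕ`, inducing the product topology. -/
noncomputable instance : MetricSpace (ℕ → Fin 2) := PiNat.metricSpace

/-- Prepend the letter `v` to the sequence `x`. -/
def cons (v : Fin 2) (x : ℕ → Fin 2) : ℕ → Fin 2
  | 0 => v
  | n + 1 => x n

/-- Pink's recursive equations for the generators `b₁, …, b_r` of the group `H̃_r`
(strictly pre-periodic case with pre-period `s`): `b₁(v·w) = (1-v)·w`,
`b_{s+1}(0·w) = 0·b_s(w)`, `b_{s+1}(1·w) = 1·b_r(w)`, and for `2 ≤ i ≤ r` with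
`i ≠ s+1`, `b_i(0·w) = 0·b_{i-1}(w)`, `b_i(1·w) = 1·w`. -/
def PinkPreRec (r s : ℕ) (b : ℕ → (ℕ → Fin 2) → (ℕ → Fin 2)) : Prop :=
  (∀ w, b 1 (cons 0 w) = cons 1 w) ∧
  (∀ w, b 1 (cons 1 w) = cons 0 w) ∧
  (∀ w, b (s + 1) (cons 0 w) = cons 0 (b s w)) ∧
  (∀ w, b (s + 1) (cons 1 w) = cons 1 (b r w)) ∧
  ∀ i, 2 ≤ i → i ≤ r → i ≠ s + 1 →
    (∀ w, b i (cons 0 w) = cons 0 (b (i - 1) w)) ∧ (∀ w, b i (cons 1 w) = cons 1 w)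

/-- An action of a family `Γ` of self-maps of a metric space `X` is locally quasi-analytic
if there is `ε > 0` such that for every open set `U` of diameter less than `ε`,
any two elements of `Γ` that agree on a nonempty open subset `V ⊆ U` agree on all of `U`. -/
def IsLocallyQuasiAnalytic {X : Type*} [MetricSpace X] (Γ : Set (X → X)) : Prop :=
  ∃ ε > (0 : ℝ), ∀ U : Set X, IsOpen U → Metric.diam U < ε →
    ∀ g₁ ∈ Γ, ∀ g₂ ∈ Γ, ∀ V : Set X, V ⊆ U → IsOpen V → V.Nonempty →
      Set.EqOn g₁ g₂ V → Set.EqOn g₁ g₂ U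

/-- `g` is a non-Hausdorff element: it fixes a point `x`, is not the identity on any open
neighborhood of `x`, yet every open neighborhood of `x` contains a nonempty open subset
on which `g` is the identity. -/
def IsNonHausdorffElement {X : Type*} [TopologicalSpace X] (g : X → X) : Prop :=
  ∃ x : X, g x = x ∧
    (∀ W : Set X, IsOpen W → x ∈ W → ¬ Set.EqOn g id W) ∧
    (∀ W : Set X, IsOpen W → x ∈ W → ∃ O : Set X, IsOpen O ∧ O.Nonempty ∧ O ⊆ W ∧
      Set.EqOn g id O)

namespace PinkAux

open PiNat

/-- Transition function for the state automaton of Pink's generators. -/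
def pstep (r s : ℕ) (j : ℕ) (v : Fin 2) : ℕ :=
  if j ≤ 1 then 0 else if v = 0 then j - 1 else if j = s + 1 then r else 0

/-- State of the automaton after reading `n` letters of `x`, starting in state `i`. -/
def pst (r s : ℕ) (i : ℕ) (x : ℕ → Fin 2) : ℕ → ℕ
  | 0 => i
  | n + 1 => pstep r s (pst r s i x n) (x n)

/-- Explicit form of Pink's generators: flip the letter at the (unique) position where
the state automaton reaches state `1`. -/
def bmap (r s : ℕ) (i : ℕ) (x : ℕ → Fin 2) : ℕ → Fin 2 :=
  fun n => if pst r s i x n = 1 then 1 - x n else x n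

theorem fin2_cases : ∀ v : Fin 2, v = 0 ∨ v = 1 := by decide

theorem cons_tail (x : ℕ → Fin 2) : cons (x 0) (fun k => x (k + 1)) = x := by
  funext n; cases n <;> rfl

theorem pst_cons (r s i : ℕ) (v : Fin 2) (w : ℕ → Fin 2) (n : ℕ) :
    pst r s i (cons v w) (n + 1) = pst r s (pstep r s i v) w n := by
  induction n with
  | zero => rfl
  | succ n ih => rw [pst, ih]; rfl

theorem pst_zero (r s : ℕ) (x : ℕ → Fin 2) (n : ℕ) : pst r s 0 x n = 0 := by
  induction n with
  | zero => rfl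
  | succ n ih => rw [pst, ih]; rfl

theorem bmap_zero (r s : ℕ) (x : ℕ → Fin 2) : bmap r s 0 x = x := by
  funext n; simp [bmap, pst_zero]

theorem bmap_cons (r s i : ℕ) (v : Fin 2) (w : ℕ → Fin 2) (n : ℕ) :
    bmap r s i (cons v w) (n + 1) = bmap r s (pstep r s i v) w n := by
  simp only [bmap, pst_cons]; rfl

theorem bmap_coord_zero (r s i : ℕ) (x : ℕ → Fin 2) :
    bmap r s i x 0 = if i = 1 then 1 - x 0 else x 0 := by
  simp [bmap, pst]; exact if_congr Iff.rfl rfl rfl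

theorem bmap_cons_full (r s i : ℕ) (v : Fin 2) (w : ℕ → Fin 2) :
    bmap r s i (cons v w) =
      cons (if i = 1 then 1 - v else v) (bmap r s (pstep r s i v) w) := by
  funext n
  cases n with
  | zero => rw [bmap_coord_zero]; rfl
  | succ n => rw [bmap_cons]; rfl

theorem pstep_one (r s : ℕ) (v : Fin 2) : pstep r s 1 v = 0 := by simp [pstep]

theorem pstep_bit0 (r s j : ℕ) (hj : 2 ≤ j) : pstep r s j 0 = j - 1 := by
  simp [pstep]; omega

theorem pstep_bit1_ne (r s j : ℕ) (hj : 2 ≤ j) (h : j ≠ s + 1) : pstep r s j 1 = 0 := by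
  have h1 : ¬ (j ≤ 1) := by omega
  have h2 : (1 : Fin 2) ≠ 0 := by decide
  simp [pstep, h1, h2, h]

theorem pstep_bit1_eq (r s : ℕ) (hs : 1 ≤ s) : pstep r s (s + 1) 1 = r := by
  have h1 : ¬ (s + 1 ≤ 1) := by omega
  have h2 : (1 : Fin 2) ≠ 0 := by decide
  simp [pstep, h1, h2]

theorem pst_bmap (r s i : ℕ) (x : ℕ → Fin 2) (n : ℕ) :
    pst r s i (bmap r s i x) n = pst r s i x n := by
  induction n with
  | zero => rfl
  | succ n ih =>
    rw [pst, pst, ih]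
    by_cases h : pst r s i x n = 1
    · simp [pstep, h]
    · simp [bmap, h]

theorem bmap_involutive (r s i : ℕ) : Function.Involutive (bmap r s i) := by
  intro x
  funext n
  simp only [bmap, pst_bmap]
  by_cases h : pst r s i x n = 1
  · simp only [if_pos h]
    exact (by decide : ∀ a : Fin 2, 1 - (1 - a) = a) _
  · simp [h]

theorem continuous_pst (r s i : ℕ) (n : ℕ) :
    Continuous fun x : ℕ → Fin 2 => pst r s i x n := by
  induction n with
  | zero => exact continuous_const
  | succ n ih =>
    have : (fun x : ℕ → Fin 2 => pst r s i x (n + 1)) =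
        (fun p : ℕ × Fin 2 => pstep r s p.1 p.2) ∘ fun x => (pst r s i x n, x n) := rfl
    rw [this]
    exact (continuous_of_discreteTopology).comp (ih.prodMk (continuous_apply n))

theorem continuous_bmap (r s i : ℕ) : Continuous (bmap r s i) := by
  refine continuous_pi fun n => ?_
  have : (fun x : ℕ → Fin 2 => bmap r s i x n) =
      (fun p : ℕ × Fin 2 => if p.1 = 1 then 1 - p.2 else p.2) ∘
        fun x => (pst r s i x n, x n) := rfl
  rw [this]
  exact (continuous_of_discreteTopology).comp
    ((continuous_pst r s i n).prodMk (continuous_apply n))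

theorem bmap_pinkPreRec (r s : ℕ) (hr : 3 ≤ r) (hs : 1 ≤ s) (hsr : s < r) :
    PinkPreRec r s (bmap r s) := by
  have h2 : (1 : Fin 2) - 0 = 1 := by decide
  have h3 : (1 : Fin 2) - 1 = 0 := by decide
  refine ⟨fun w => ?_, fun w => ?_, fun w => ?_, fun w => ?_, fun i hi2 hir hine => ⟨fun w => ?_, fun w => ?_⟩⟩
  · rw [bmap_cons_full, pstep_one, bmap_zero, if_pos rfl, h2]
  · rw [bmap_cons_full, pstep_one, bmap_zero, if_pos rfl, h3]
  · rw [bmap_cons_full, pstep_bit0 r s _ (by omega), if_neg (by omega)]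
    norm_num
  · rw [bmap_cons_full, pstep_bit1_eq r s hs, if_neg (by omega)]
  · rw [bmap_cons_full, pstep_bit0 r s _ hi2, if_neg (by omega)]
  · rw [bmap_cons_full, pstep_bit1_ne r s _ hi2 hine, bmap_zero, if_neg (by omega)]

theorem bmap_unique (r s : ℕ) (hr : 3 ≤ r) (hs : 1 ≤ s) (hsr : s < r)
    (b : ℕ → (ℕ → Fin 2) → (ℕ → Fin 2)) (hb : PinkPreRec r s b) :
    ∀ n i, 1 ≤ i → i ≤ r → ∀ x, b i x n = bmap r s i x n := by
  obtain ⟨e1, e2, e3, e4, e5⟩ := hb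
  intro n
  induction n with
  | zero =>
    intro i h1 hir x
    rw [← cons_tail x]
    rcases fin2_cases (x 0) with h | h <;> rw [h]
    all_goals rw [bmap_cons_full]
    · by_cases hi1 : i = 1
      · subst hi1; rw [e1]; rfl
      · by_cases his : i = s + 1
        · subst his; rw [e3, if_neg hi1]; rfl
        · rw [(e5 i (by omega) hir his).1]; simp [hi1]; rfl
    · by_cases hi1 : i = 1
      · subst hi1; rw [e2]; rfl
      · by_cases his : i = s + 1
        · subst his; rw [e4, if_neg hi1]; rfl
        · rw [(e5 i (by omega) hir his).2]; simp [hi1]; rfl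
  | succ n ih =>
    intro i h1 hir x
    rw [← cons_tail x]
    rcases fin2_cases (x 0) with h | h <;> rw [h]
    all_goals rw [bmap_cons]
    · by_cases hi1 : i = 1
      · subst hi1; rw [e1, pstep_one, bmap_zero]; rfl
      · by_cases his : i = s + 1
        · subst his
          rw [e3]
          show b s (fun k => x (k + 1)) n = bmap r s (pstep r s (s + 1) 0) (fun k => x (k + 1)) n
          rw [pstep_bit0 r s _ (by omega)]
          simpa using ih s hs (by omega) (fun k => x (k + 1))
        · rw [(e5 i (by omega) hir his).1]
          show b (i - 1) (fun k => x (k + 1)) n = bmap r s (pstep r s i 0) (fun k => x (k + 1)) n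
          rw [pstep_bit0 r s _ (by omega)]
          exact ih (i - 1) (by omega) (by omega) (fun k => x (k + 1))
    · by_cases hi1 : i = 1
      · subst hi1; rw [e2, pstep_one, bmap_zero]; rfl
      · by_cases his : i = s + 1
        · subst his
          rw [e4]
          show b r (fun k => x (k + 1)) n = bmap r s (pstep r s (s + 1) 1) (fun k => x (k + 1)) n
          rw [pstep_bit1_eq r s hs]
          exact ih r (by omega) le_rfl (fun k => x (k + 1))
        · rw [(e5 i (by omega) hir his).2]
          show (fun k => x (k + 1)) n = bmap r s (pstep r s i 1) (fun k => x (k + 1)) n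
          rw [pstep_bit1_ne r s _ (by omega) his, bmap_zero]

theorem bmap_eq (r s : ℕ) (hr : 3 ≤ r) (hs : 1 ≤ s) (hsr : s < r)
    (b : ℕ → (ℕ → Fin 2) → (ℕ → Fin 2)) (hb : PinkPreRec r s b)
    {i : ℕ} (h1 : 1 ≤ i) (hir : i ≤ r) : b i = bmap r s i := by
  funext x n
  exact bmap_unique r s hr hs hsr b hb n i h1 hir x

/-- The state sequence along the fixed point `xstar`. -/
def sig (r s : ℕ) : ℕ → ℕ
  | 0 => s + 1
  | k + 1 => if sig r s k = s + 1 then r else sig r s k - 1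

/-- The fixed point of `b_{s+1}` on which the automaton runs forever. -/
def xstar (r s : ℕ) : ℕ → Fin 2 := fun k => if sig r s k = s + 1 then 1 else 0

theorem sig_bounds (r s : ℕ) (hsr : s < r) (k : ℕ) :
    s + 1 ≤ sig r s k ∧ sig r s k ≤ r := by
  induction k with
  | zero => simp only [sig]; omega
  | succ k ih =>
    rw [sig]
    by_cases h : sig r s k = s + 1
    · rw [if_pos h]; omega
    · rw [if_neg h]; omega

theorem pst_xstar (r s : ℕ) (hs : 1 ≤ s) (hsr : s < r) (k : ℕ) :
    pst r s (s + 1) (xstar r s) k = sig r s k := by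
  induction k with
  | zero => rfl
  | succ k ih =>
    rw [pst, ih, sig]
    by_cases h : sig r s k = s + 1
    · rw [if_pos h, h]
      have : xstar r s k = 1 := by simp [xstar, h]
      rw [this, pstep_bit1_eq r s hs]
    · rw [if_neg h]
      have hb := sig_bounds r s hsr k
      have : xstar r s k = 0 := by simp [xstar, h]
      rw [this, pstep_bit0 r s _ (by omega)]

theorem bmap_fixes_xstar (r s : ℕ) (hs : 1 ≤ s) (hsr : s < r) :
    bmap r s (s + 1) (xstar r s) = xstar r s := by
  funext n
  have h := pst_xstar r s hs hsr n
  have hb := sig_bounds r s hsr n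
  simp only [bmap]
  rw [if_neg (by omega)]

theorem pst_congr (r s i : ℕ) (x y : ℕ → Fin 2) (n : ℕ)
    (h : ∀ k < n, x k = y k) : pst r s i x n = pst r s i y n := by
  induction n with
  | zero => rfl
  | succ n ih =>
    rw [pst, pst, ih (fun k hk => h k (by omega)), h n (by omega)]

theorem pst_zero_stable (r s i : ℕ) (x : ℕ → Fin 2) (m : ℕ)
    (h : pst r s i x m = 0) : ∀ k, m ≤ k → pst r s i x k = 0 := by
  intro k hk
  induction k, hk using Nat.le_induction with
  | base => exact h
  | succ k hk ih => rw [pst, ih]; simp [pstep]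

theorem pst_descend (r s i : ℕ) (x : ℕ → Fin 2) :
    ∀ j N, pst r s i x N = j + 1 → (∀ t, N ≤ t → x t = 0) →
      pst r s i x (N + j) = 1 := by
  intro j
  induction j with
  | zero => intro N h _; simpa using h
  | succ j ih =>
    intro N h hz
    have h1 : pst r s i x (N + 1) = j + 1 := by
      rw [pst, h, hz N le_rfl, pstep_bit0 r s _ (by omega)]; omega
    have := ih (N + 1) h1 (fun t ht => hz t (by omega))
    rwa [show N + 1 + j = N + (j + 1) by omega] at this

/-- The point agreeing with `xstar` up to `N` and then all zeros is moved by `b_{s+1}`. -/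
theorem bmap_moves_tailzero (r s : ℕ) (hs : 1 ≤ s) (hsr : s < r) (N : ℕ) :
    ∃ y : ℕ → Fin 2, (∀ k < N, y k = xstar r s k) ∧ bmap r s (s + 1) y ≠ y := by
  refine ⟨fun k => if k < N then xstar r s k else 0, fun k hk => by simp [hk], ?_⟩
  set y : ℕ → Fin 2 := fun k => if k < N then xstar r s k else 0 with hy
  have hb := sig_bounds r s hsr N
  have hN : pst r s (s + 1) y N = (sig r s N - 1) + 1 := by
    rw [pst_congr r s (s + 1) y (xstar r s) N (fun k hk => by simp [hy, hk]),
      pst_xstar r s hs hsr]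
    omega
  have h1 : pst r s (s + 1) y (N + (sig r s N - 1)) = 1 :=
    pst_descend r s (s + 1) y _ N hN (fun t ht => by simp only [hy]; rw [if_neg (by omega)])
  intro hcontra
  have := congrFun hcontra (N + (sig r s N - 1))
  rw [bmap, if_pos h1] at this
  have hy0 : y (N + (sig r s N - 1)) = 0 := by simp only [hy]; rw [if_neg (by omega)]
  rw [hy0] at this
  exact absurd this (by decide)

/-- From any state `2 ≤ j ≤ r` one can reach state `0` in two steps avoiding state `1`. -/
theorem steer (r s : ℕ) (hr : 3 ≤ r) (hs : 1 ≤ s) (hsr : s < r) (j : ℕ)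
    (hj2 : 2 ≤ j) (hjr : j ≤ r) :
    ∃ b0 b1 : Fin 2, pstep r s j b0 ≠ 1 ∧ pstep r s (pstep r s j b0) b1 = 0 := by
  by_cases h : j = s + 1
  · subst h
    by_cases h2 : 2 ≤ s
    · refine ⟨0, 1, ?_, ?_⟩
      · rw [pstep_bit0 r s _ hj2]; omega
      · rw [pstep_bit0 r s _ hj2]
        simp only [Nat.add_sub_cancel]
        exact pstep_bit1_ne r s s h2 (by omega)
    · have hs1 : s = 1 := by omega
      refine ⟨1, 1, ?_, ?_⟩
      · rw [pstep_bit1_eq r s hs]; omega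
      · rw [pstep_bit1_eq r s hs]
        exact pstep_bit1_ne r s r (by omega) (by omega)
  · refine ⟨1, 0, ?_, ?_⟩
    · rw [pstep_bit1_ne r s j hj2 h]; omega
    · rw [pstep_bit1_ne r s j hj2 h]; simp [pstep]

/-- Inside any cylinder around `xstar` there is a smaller cylinder on which
`b_{s+1}` is the identity. -/
theorem bmap_id_on_subcylinder (r s : ℕ) (hr : 3 ≤ r) (hs : 1 ≤ s) (hsr : s < r) (N : ℕ) :
    ∃ z0 : ℕ → Fin 2, (∀ k < N, z0 k = xstar r s k) ∧
      ∀ z ∈ PiNat.cylinder z0 (N + 2), bmap r s (s + 1) z = z := by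
  have hb := sig_bounds r s hsr N
  obtain ⟨b0, b1, hb0, hb1⟩ := steer r s hr hs hsr (sig r s N) (by omega) hb.2
  refine ⟨fun k => if k < N then xstar r s k else if k = N then b0 else b1,
    fun k hk => by simp [hk], ?_⟩
  set z0 : ℕ → Fin 2 := fun k => if k < N then xstar r s k else if k = N then b0 else b1
    with hz0
  intro z hz
  rw [PiNat.mem_cylinder_iff] at hz
  have key : ∀ k, pst r s (s + 1) z k ≠ 1 := by
    have hN : ∀ k ≤ N, pst r s (s + 1) z k = sig r s k := by
      intro k hk
      rw [pst_congr r s (s + 1) z (xstar r s) k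
        (fun m hm => by rw [hz m (by omega)]; simp [hz0]; omega), pst_xstar r s hs hsr]
    have hzN : z N = b0 := by rw [hz N (by omega)]; simp [hz0]
    have hzN1 : z (N + 1) = b1 := by
      rw [hz (N + 1) (by omega)]; simp [hz0]
    have hN1 : pst r s (s + 1) z (N + 1) = pstep r s (sig r s N) b0 := by
      rw [pst, hN N le_rfl, hzN]
    have hN2 : pst r s (s + 1) z (N + 2) = 0 := by
      rw [pst, hN1, hzN1, hb1]
    intro k
    rcases lt_or_ge k (N + 1) with hk | hk
    · rcases Nat.lt_succ_iff.mp hk with hk'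
      rw [hN k hk']
      have := sig_bounds r s hsr k
      omega
    · rcases eq_or_lt_of_le hk with hk' | hk'
      · rw [← hk', hN1]; exact hb0
      · rw [pst_zero_stable r s (s + 1) z (N + 2) hN2 k (by omega)]; omega
  funext n
  rw [bmap, if_neg (key n)]

/-- Pink's generators as homeomorphisms. -/
noncomputable def bhomeo (r s i : ℕ) : (ℕ → Fin 2) ≃ₜ (ℕ → Fin 2) where
  toFun := bmap r s i
  invFun := bmap r s i
  left_inv := bmap_involutive r s i
  right_inv := bmap_involutive r s i
  continuous_toFun := continuous_bmap r s i
  continuous_invFun := continuous_bmap r s i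

theorem exists_cylinder_subset {W : Set (ℕ → Fin 2)} (hW : IsOpen W) {x : ℕ → Fin 2}
    (hx : x ∈ W) : ∃ N, PiNat.cylinder x N ⊆ W := by
  obtain ⟨V, ⟨y, n, rfl⟩, hxV, hVW⟩ :=
    (PiNat.isTopologicalBasis_cylinders (fun _ : ℕ => Fin 2)).exists_subset_of_mem_open hx hW
  exact ⟨n, by rw [PiNat.mem_cylinder_iff_eq.1 hxV]; exact hVW⟩

theorem diam_cylinder_le (x : ℕ → Fin 2) (N : ℕ) :
    Metric.diam (PiNat.cylinder x N) ≤ (1 / 2 : ℝ) ^ N := by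
  refine Metric.diam_le_of_forall_dist_le (by positivity) fun y hy z hz => ?_
  refine PiNat.mem_cylinder_iff_dist_le.1 ?_
  exact fun i hi => (hy i hi).trans (hz i hi).symm

theorem isOpen_cyl (x : ℕ → Fin 2) (n : ℕ) : IsOpen (PiNat.cylinder x n) := by
  exact PiNat.isOpen_cylinder (E := fun _ => Fin 2) x n

end PinkAux

/-- For `r ≥ 3` and `1 ≤ s < r`, Pink's recursively defined maps `b₁, …, b_r` exist and
are homeomorphisms of `X = {0,1}^ℕ`, the group `H̃_r = ⟨b₁, …, b_r⟩` contains a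
non-Hausdorff element, and the action of `H̃_r` on `X` is not locally quasi-analytic. -/
theorem stmt9 (r s : ℕ) (hr : 3 ≤ r) (hs : 1 ≤ s) (hsr : s < r) :
    (∃ b : ℕ → (ℕ → Fin 2) → (ℕ → Fin 2), PinkPreRec r s b) ∧
    (∀ b : ℕ → (ℕ → Fin 2) → (ℕ → Fin 2), PinkPreRec r s b →
      ∀ i, 1 ≤ i → i ≤ r → IsHomeomorph (b i)) ∧
    ∀ B : ℕ → (ℕ → Fin 2) ≃ₜ (ℕ → Fin 2), PinkPreRec r s (fun i => ⇑(B i)) →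
      (∃ g ∈ (Subgroup.closure (B '' {i | 1 ≤ i ∧ i ≤ r}) :
          Subgroup ((ℕ → Fin 2) ≃ₜ (ℕ → Fin 2))), IsNonHausdorffElement (⇑g)) ∧
      ¬ IsLocallyQuasiAnalytic
        ((fun g : (ℕ → Fin 2) ≃ₜ (ℕ → Fin 2) => ⇑g) ''
          ((Subgroup.closure (B '' {i | 1 ≤ i ∧ i ≤ r}) :
            Subgroup ((ℕ → Fin 2) ≃ₜ (ℕ → Fin 2))) : Set ((ℕ → Fin 2) ≃ₜ (ℕ → Fin 2)))) := by
  classical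
  open PinkAux in
  refine ⟨⟨bmap r s, bmap_pinkPreRec r s hr hs hsr⟩, ?_, ?_⟩
  · intro b hb i h1 hir
    rw [PinkAux.bmap_eq r s hr hs hsr b hb h1 hir]
    exact (PinkAux.bhomeo r s i).isHomeomorph
  · intro B hB
    have hBs : ⇑(B (s + 1)) = PinkAux.bmap r s (s + 1) :=
      PinkAux.bmap_eq r s hr hs hsr (fun i => ⇑(B i)) hB (by omega) (by omega)
    have hmem : B (s + 1) ∈ Subgroup.closure (B '' {i | 1 ≤ i ∧ i ≤ r}) :=
      Subgroup.subset_closure ⟨s + 1, ⟨by omega, by omega⟩, rfl⟩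
    have hone : ⇑(1 : (ℕ → Fin 2) ≃ₜ (ℕ → Fin 2)) = id := rfl
    constructor
    · refine ⟨B (s + 1), hmem, PinkAux.xstar r s, ?_, ?_, ?_⟩
      · rw [hBs]; exact PinkAux.bmap_fixes_xstar r s hs hsr
      · intro W hW hxW hEq
        obtain ⟨N, hN⟩ := PinkAux.exists_cylinder_subset hW hxW
        obtain ⟨y, hy1, hy2⟩ := PinkAux.bmap_moves_tailzero r s hs hsr N
        have hyW : y ∈ W := hN (PiNat.mem_cylinder_iff.2 fun k hk => hy1 k hk)
        exact hy2 (by rw [← hBs]; exact hEq hyW)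
      · intro W hW hxW
        obtain ⟨N, hN⟩ := PinkAux.exists_cylinder_subset hW hxW
        obtain ⟨z0, hz1, hz2⟩ := PinkAux.bmap_id_on_subcylinder r s hr hs hsr N
        refine ⟨PiNat.cylinder z0 (N + 2), PinkAux.isOpen_cyl _ _,
          ⟨z0, PiNat.self_mem_cylinder _ _⟩, ?_, ?_⟩
        · intro z hz
          refine hN (PiNat.mem_cylinder_iff.2 fun k hk => ?_)
          exact (PiNat.mem_cylinder_iff.1 hz k (by omega)).trans (hz1 k hk)
        · intro z hz
          show ⇑(B (s + 1)) z = z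
          rw [hBs]
          exact hz2 z hz
    · rintro ⟨ε, εpos, H⟩
      obtain ⟨N, hNε⟩ := exists_pow_lt_of_lt_one εpos (by norm_num : (1 / 2 : ℝ) < 1)
      obtain ⟨z0, hz1, hz2⟩ := PinkAux.bmap_id_on_subcylinder r s hr hs hsr N
      obtain ⟨y, hy1, hy2⟩ := PinkAux.bmap_moves_tailzero r s hs hsr N
      have hdiam : Metric.diam (PiNat.cylinder (PinkAux.xstar r s) N) < ε :=
        lt_of_le_of_lt (PinkAux.diam_cylinder_le _ _) hNε
      have hkey := H (PiNat.cylinder (PinkAux.xstar r s) N) (PinkAux.isOpen_cyl _ _) hdiam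
        (⇑(B (s + 1))) ⟨B (s + 1), hmem, rfl⟩ (⇑(1 : (ℕ → Fin 2) ≃ₜ (ℕ → Fin 2)))
        ⟨1, (Subgroup.closure (B '' {i | 1 ≤ i ∧ i ≤ r})).one_mem, rfl⟩
        (PiNat.cylinder z0 (N + 2))
        (fun z hz => PiNat.mem_cylinder_iff.2 fun k hk =>
          (PiNat.mem_cylinder_iff.1 hz k (by omega)).trans (hz1 k hk))
        (PinkAux.isOpen_cyl _ _) ⟨z0, PiNat.self_mem_cylinder _ _⟩
        (fun z hz => by rw [hone, hBs]; exact hz2 z hz)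
      have hyU : y ∈ PiNat.cylinder (PinkAux.xstar r s) N :=
        PiNat.mem_cylinder_iff.2 fun k hk => hy1 k hk
      have := hkey hyU
      rw [hone, hBs] at this
      exact hy2 this
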